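/- arXiv:1002.4862 — 5 statements merged into one kernel-verified Lean document; each statement's English description precedes it below -/
import Mathlib

section
/- For any natural number n and non-negative real numbers x_1, ..., x_n, the sum over i of x_i / sqrt(x_1 + ... + x_i) is at most 2 * sqrt(x_1 + ... + x_n), where terms with zero denominator are interpreted as zero. -/
open Finset

lemma key_step (s a : ℝ) (hs : 0 ≤ s) (ha : 0 ≤ a) :
    a / Real.sqrt (s + a) ≤ 2 * (Real.sqrt (s + a) - Real.sqrt s) := by
  rcases eq_or_lt_of_le (by linarith : (0:ℝ) ≤ s + a) with h | h
  · simp [← h, show a = -s by linarith, show s = 0 by nlinarith]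
  · have hsa : Real.sqrt (s + a) > 0 := Real.sqrt_pos.mpr h
    have h1 : Real.sqrt s ≤ Real.sqrt (s + a) := Real.sqrt_le_sqrt (by linarith)
    have h2 : Real.sqrt (s + a) ^ 2 = s + a := Real.sq_sqrt (le_of_lt h)
    have h3 : Real.sqrt s ^ 2 = s := Real.sq_sqrt hs
    rw [div_le_iff₀ hsa]
    nlinarith [Real.sqrt_nonneg s, Real.sqrt_nonneg (s + a)]

lemma nat_version (y : ℕ → ℝ) (hy : ∀ i, 0 ≤ y i) (n : ℕ) :
    ∑ i ∈ range n, y i / Real.sqrt (∑ j ∈ range (i + 1), y j) ≤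
      2 * Real.sqrt (∑ i ∈ range n, y i) := by
  induction n with
  | zero => simp
  | succ n ih =>
    rw [sum_range_succ, sum_range_succ (f := y)]
    have h1 : 0 ≤ ∑ i ∈ range n, y i := sum_nonneg fun i _ => hy i
    have := key_step (∑ i ∈ range n, y i) (y n) h1 (hy n)
    linarith

theorem stmt_0 (n : ℕ) (x : Fin n → ℝ) (hx : ∀ i, 0 ≤ x i) :
    ∑ i, x i / Real.sqrt (∑ j ∈ Finset.Iic i, x j) ≤
      2 * Real.sqrt (∑ i, x i) := by
  set y : ℕ → ℝ := fun j => if h : j < n then x ⟨j, h⟩ else 0 with hy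
  have hy0 : ∀ i, 0 ≤ y i := by
    intro i; simp only [hy]; split
    · exact hx _
    · exact le_refl 0
  have hIic : ∀ i : Fin n, ∑ j ∈ Finset.Iic i, x j = ∑ j ∈ range (i.val + 1), y j := by
    intro i
    rw [show range (i.val + 1) = Finset.Iic i.val from by ext; simp [Nat.lt_succ_iff],
      ← Fin.map_valEmbedding_Iic, Finset.sum_map]
    refine Finset.sum_congr rfl fun j _ => ?_
    simp [hy, j.isLt]
  have hterm : ∀ i : Fin n,
      x i / Real.sqrt (∑ j ∈ Finset.Iic i, x j) =
        y i.val / Real.sqrt (∑ j ∈ range (i.val + 1), y j) := by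
    intro i
    rw [hIic i]
    congr 1
    simp [hy, i.isLt]
  have htot : ∑ i, x i = ∑ i ∈ range n, y i := by
    rw [← Fin.sum_univ_eq_sum_range y n]
    exact Finset.sum_congr rfl fun i _ => by simp [hy, i.isLt]
  simp_rw [hterm]
  rw [Fin.sum_univ_eq_sum_range (fun i => y i / Real.sqrt (∑ j ∈ range (i + 1), y j)), htot]
  exact nat_version y hy0 n
end

section
/- For positive reals D and g_1,...,g_T, among all non-increasing sequences of positive learning rates η_1 ≥ η_2 ≥ ... ≥ η_T, the bound B(η) = D²/(2η_T) + (1/2)∑_t g_t² η_t is minimized by the constant sequence η_t = D / sqrt(∑_{s=1}^T g_s²), achieving minimum value D * sqrt(∑_{t=1}^T g_t²). -/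
theorem stmt_1 (D : ℝ) (hD : 0 < D) (n : ℕ) (g : Fin (n + 1) → ℝ)
    (hg : 0 < ∑ t, (g t) ^ 2) :
    (∀ η : Fin (n + 1) → ℝ, (∀ t, 0 < η t) → (∀ s t, s ≤ t → η t ≤ η s) →
      D * Real.sqrt (∑ t, (g t) ^ 2) ≤
        D ^ 2 / (2 * η (Fin.last n)) + (1 / 2) * ∑ t, (g t) ^ 2 * η t) ∧
    (let η : Fin (n + 1) → ℝ := fun _ => D / Real.sqrt (∑ t, (g t) ^ 2)
     D ^ 2 / (2 * η (Fin.last n)) + (1 / 2) * ∑ t, (g t) ^ 2 * η t =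
       D * Real.sqrt (∑ t, (g t) ^ 2)) := by
  set G := ∑ t, (g t) ^ 2 with hG
  have hs : Real.sqrt G ^ 2 = G := Real.sq_sqrt hg.le
  have hspos : 0 < Real.sqrt G := Real.sqrt_pos.mpr hg
  constructor
  · intro η hpos hmono
    set x := η (Fin.last n) with hx
    have hxpos : 0 < x := hpos _
    have hsum : G * x ≤ ∑ t, (g t) ^ 2 * η t := by
      rw [hG, Finset.sum_mul]
      apply Finset.sum_le_sum
      intro t _
      exact mul_le_mul_of_nonneg_left (hmono t (Fin.last n) (Fin.le_last t)) (sq_nonneg _)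
    have key : D * Real.sqrt G ≤ D ^ 2 / (2 * x) + (1 / 2) * (G * x) := by
      rw [div_add' _ _ _ (by positivity), le_div_iff₀ (by positivity)]
      have h1 : 0 ≤ (D - Real.sqrt G * x) ^ 2 := sq_nonneg _
      have h2 : (D - Real.sqrt G * x) ^ 2 = D ^ 2 - 2 * D * Real.sqrt G * x + G * x ^ 2 := by
        have : (D - Real.sqrt G * x) ^ 2 = D ^ 2 - 2 * D * Real.sqrt G * x + Real.sqrt G ^ 2 * x ^ 2 := by ring
        rw [this, hs]
      nlinarith
    linarith
  · intro η
    have hη : η (Fin.last n) = D / Real.sqrt G := rfl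
    have hsum : ∑ t, (g t) ^ 2 * η t = G * (D / Real.sqrt G) := by
      rw [hG, Finset.sum_mul]
    rw [hη, hsum]
    field_simp
    nlinarith [hs, hspos, hD]
end

section
/- Let F = [0,D] ⊂ ℝ and f_t(x) = −Gx for all t, with G, η, D > 0. The gradient descent iterates x_1 = 0, x_{t+1} = min(D, x_t + Gη) satisfy x_t = min(D, (t−1)Gη). Consequently, if D/(2Gη) ≤ T, the regret over T rounds relative to the comparator x = D is at least D²/(4η). -/
theorem stmt_6 (D G η : ℝ) (hG : 0 < G) (hη : 0 < η) (hD : 0 < D)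
    (x : ℕ → ℝ) (hx1 : x 1 = 0)
    (hrec : ∀ t, 1 ≤ t → x (t + 1) = min D (x t + G * η)) :
    (∀ t, 1 ≤ t → x t = min D ((t - 1 : ℝ) * G * η)) ∧
    (∀ T : ℕ, 1 ≤ T → D / (2 * G * η) ≤ (T : ℝ) →
      D ^ 2 / (4 * η) ≤ G * ∑ t ∈ Finset.Icc 1 T, (D - x t)) := by
  have hc : 0 < G * η := mul_pos hG hη
  have hpart1 : ∀ t, 1 ≤ t → x t = min D ((t - 1 : ℝ) * G * η) := by
    intro t ht
    induction t with
    | zero => omega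
    | succ n ih =>
      rcases Nat.lt_or_ge 1 (n + 1) with h | h
      · have hn : 1 ≤ n := by omega
        rw [hrec n hn, ih hn]
        push_cast
        rcases le_total (((n : ℝ) - 1) * G * η) D with h1 | h1
        · rw [min_eq_right h1]
          congr 1
          ring
        · rw [min_eq_left h1]
          rw [min_eq_left (by linarith), min_eq_left (by nlinarith)]
      · have hn : n = 0 := by omega
        subst hn
        rw [hx1]
        norm_num [hD.le]
  refine ⟨hpart1, ?_⟩
  intro T hT hTD
  have hTD' : D / (2 * (G * η)) ≤ (T : ℝ) := by
    rw [show 2 * (G * η) = 2 * G * η by ring]; exact hTD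
  set N := min T (Nat.floor (D / (2 * (G * η))) + 1) with hN
  have hN1 : 1 ≤ N := le_min hT (Nat.succ_le_succ (Nat.zero_le _))
  have hNle : ∀ t ∈ Finset.Icc 1 N, D / 2 ≤ D - x t := by
    intro t htm
    simp only [Finset.mem_Icc] at htm
    have htf : t - 1 ≤ Nat.floor (D / (2 * (G * η))) := by
      have := htm.2
      have h2 := min_le_right T (Nat.floor (D / (2 * (G * η))) + 1)
      omega
    have h1 : (t : ℝ) - 1 ≤ D / (2 * (G * η)) := by
      have hcast : ((t - 1 : ℕ) : ℝ) ≤ (Nat.floor (D / (2 * (G * η))) : ℝ) := by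
        exact_mod_cast htf
      have hfl : ((Nat.floor (D / (2 * (G * η)))) : ℝ) ≤ D / (2 * (G * η)) :=
        Nat.floor_le (by positivity)
      have ht1 : ((t - 1 : ℕ) : ℝ) = (t : ℝ) - 1 := by
        have := htm.1; push_cast [Nat.cast_sub this]; ring
      linarith [hcast.trans hfl, ht1.symm.le]
    have h2 : ((t : ℝ) - 1) * (G * η) ≤ D / 2 := by
      have := mul_le_mul_of_nonneg_right h1 hc.le
      have heq : D / (2 * (G * η)) * (G * η) = D / 2 := by
        field_simp
      linarith [heq ▸ this]
    have ht1nn : (0 : ℝ) ≤ (t : ℝ) - 1 := by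
      have := htm.1
      have : (1 : ℝ) ≤ (t : ℝ) := by exact_mod_cast this
      linarith
    rw [hpart1 t htm.1]
    have hmin : min D (((t : ℝ) - 1) * G * η) = ((t : ℝ) - 1) * G * η := by
      apply min_eq_right
      nlinarith [mul_assoc ((t : ℝ) - 1) G η]
    rw [hmin]
    nlinarith [mul_assoc ((t : ℝ) - 1) G η]
  have hsum1 : (N : ℝ) * (D / 2) ≤ ∑ t ∈ Finset.Icc 1 N, (D - x t) := by
    calc (N : ℝ) * (D / 2) = ∑ _t ∈ Finset.Icc 1 N, (D / 2) := by
          rw [Finset.sum_const, Nat.card_Icc]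
          simp [nsmul_eq_mul]
      _ ≤ _ := Finset.sum_le_sum hNle
  have hsub : ∑ t ∈ Finset.Icc 1 N, (D - x t) ≤ ∑ t ∈ Finset.Icc 1 T, (D - x t) := by
    apply Finset.sum_le_sum_of_subset_of_nonneg
    · exact Finset.Icc_subset_Icc_right (min_le_left _ _)
    · intro t htm _
      simp only [Finset.mem_Icc] at htm
      rw [hpart1 t htm.1]
      have := min_le_left D (((t : ℝ) - 1) * G * η)
      linarith
  have hNge : D / (2 * (G * η)) ≤ (N : ℝ) := by
    rcases min_cases T (Nat.floor (D / (2 * (G * η))) + 1) with ⟨hEq, _⟩ | ⟨hEq, _⟩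
    · rw [hN, hEq]; exact hTD'
    · rw [hN, hEq]; push_cast
      exact (Nat.lt_floor_add_one _).le
  have hkey : D ^ 2 / (4 * η) ≤ G * ((N : ℝ) * (D / 2)) := by
    have h3 : D / (2 * (G * η)) * (D / 2) ≤ (N : ℝ) * (D / 2) :=
      mul_le_mul_of_nonneg_right hNge (by positivity)
    have h4 : G * (D / (2 * (G * η)) * (D / 2)) = D ^ 2 / (4 * η) := by
      field_simp
      ring
    nlinarith
  have hfin : G * ((N : ℝ) * (D / 2)) ≤ G * ∑ t ∈ Finset.Icc 1 T, (D - x t) := by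
    apply mul_le_mul_of_nonneg_left (hsum1.trans hsub) hG.le
  linarith
end

section
/- Let f : ℝ → ℝ be convex with subgradients bounded in absolute value by G on [0, D], and consider projected gradient descent x_{t+1} = clamp(x_t − η_t g_t, 0, D) with g_t ∈ ∂f_t(x_t), |g_t| ≤ G, and non-increasing positive η_t. Then for any comparator y ∈ [0, D], ∑_{t=1}^T g_t (x_t − y) ≤ D²/(2η_T) + (1/2) ∑_{t=1}^T g_t² η_t. -/
theorem stmt_13 (D G : ℝ) (hD : 0 < D) (T : ℕ) (hT : 1 ≤ T)
    (x g η : ℕ → ℝ) (hx1 : x 1 ∈ Set.Icc 0 D)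
    (hg : ∀ t, |g t| ≤ G)
    (hηpos : ∀ t, 0 < η t) (hηmono : ∀ s t, s ≤ t → η t ≤ η s)
    (hrec : ∀ t, 1 ≤ t → x (t + 1) = max 0 (min D (x t - η t * g t))) :
    ∀ y ∈ Set.Icc (0 : ℝ) D,
      ∑ t ∈ Finset.Icc 1 T, g t * (x t - y) ≤
        D ^ 2 / (2 * η T) +
          (1 / 2) * ∑ t ∈ Finset.Icc 1 T, (g t) ^ 2 * η t := by
  intro y hy
  obtain ⟨hy0, hyD⟩ := hy
  -- clamp nonexpansiveness (squared) toward y ∈ [0,D]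
  have clamp_sq : ∀ z : ℝ, (max 0 (min D z) - y) ^ 2 ≤ (z - y) ^ 2 := by
    intro z
    have h1 : (max 0 (min D z) - y) ^ 2 ≤ (min D z - y) ^ 2 := by
      rcases le_total 0 (min D z) with h | h
      · rw [max_eq_right h]
      · rw [max_eq_left h]; nlinarith
    have h2 : (min D z - y) ^ 2 ≤ (z - y) ^ 2 := by
      rcases le_total z D with h | h
      · rw [min_eq_right h]
      · rw [min_eq_left h]; nlinarith
    linarith
  -- all iterates stay in [0, D]
  have hmem : ∀ t : ℕ, 1 ≤ t → x t ∈ Set.Icc 0 D := by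
    intro t ht
    induction t, ht using Nat.le_induction with
    | base => exact hx1
    | succ n hn ih =>
      rw [hrec n hn]
      constructor
      · exact le_max_left _ _
      · exact max_le hD.le (min_le_left _ _)
  have hsqD : ∀ t : ℕ, 1 ≤ t → (x t - y) ^ 2 ≤ D ^ 2 := by
    intro t ht
    obtain ⟨h0, h1⟩ := hmem t ht
    nlinarith
  -- key inductive claim
  have key : ∀ n : ℕ, 1 ≤ n →
      ∑ t ∈ Finset.Icc 1 n, g t * (x t - y) ≤
        D ^ 2 / (2 * η n) - (x (n + 1) - y) ^ 2 / (2 * η n) +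
          (1 / 2) * ∑ t ∈ Finset.Icc 1 n, (g t) ^ 2 * η t := by
    intro n hn
    induction n, hn using Nat.le_induction with
    | base =>
      have hη := hηpos 1
      have h2 : (0 : ℝ) < 2 * η 1 := by linarith
      have hstep : (x 2 - y) ^ 2 ≤ (x 1 - η 1 * g 1 - y) ^ 2 := by
        have := hrec 1 le_rfl
        rw [this]; exact clamp_sq _
      have hd : (x 1 - y) ^ 2 ≤ D ^ 2 := hsqD 1 le_rfl
      have hmain : g 1 * (x 1 - y) - (1 / 2) * ((g 1) ^ 2 * η 1) ≤
          (D ^ 2 - (x 2 - y) ^ 2) / (2 * η 1) := by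
        rw [le_div_iff₀ h2]
        nlinarith
      simp only [Finset.Icc_self, Finset.sum_singleton]
      rw [show D ^ 2 / (2 * η 1) - (x (1 + 1) - y) ^ 2 / (2 * η 1)
          = (D ^ 2 - (x 2 - y) ^ 2) / (2 * η 1) by rw [sub_div]]
      linarith
    | succ n hn ih =>
      have hη1 := hηpos n
      have hη2 := hηpos (n + 1)
      have hηm : η (n + 1) ≤ η n := hηmono n (n + 1) (Nat.le_succ n)
      have h2 : (0 : ℝ) < 2 * η (n + 1) := by linarith
      have hstep : (x (n + 2) - y) ^ 2 ≤ (x (n + 1) - η (n + 1) * g (n + 1) - y) ^ 2 := by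
        have := hrec (n + 1) (by omega)
        rw [this]; exact clamp_sq _
      have hd : (x (n + 1) - y) ^ 2 ≤ D ^ 2 := hsqD (n + 1) (by omega)
      have hA : (D ^ 2 - (x (n + 1) - y) ^ 2) / (2 * η n) ≤
          (D ^ 2 - (x (n + 1) - y) ^ 2) / (2 * η (n + 1)) := by
        apply div_le_div_of_nonneg_left (by linarith) h2 (by linarith)
      have hB : g (n + 1) * (x (n + 1) - y) - (1 / 2) * ((g (n + 1)) ^ 2 * η (n + 1)) ≤
          ((x (n + 1) - y) ^ 2 - (x (n + 2) - y) ^ 2) / (2 * η (n + 1)) := by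
        rw [le_div_iff₀ h2]
        nlinarith
      rw [Finset.sum_Icc_succ_top (by omega : 1 ≤ n + 1),
          Finset.sum_Icc_succ_top (by omega : 1 ≤ n + 1)]
      have e1 : D ^ 2 / (2 * η n) - (x (n + 1) - y) ^ 2 / (2 * η n)
          = (D ^ 2 - (x (n + 1) - y) ^ 2) / (2 * η n) := by rw [sub_div]
      have e2 : D ^ 2 / (2 * η (n + 1)) - (x (n + 1 + 1) - y) ^ 2 / (2 * η (n + 1))
          = (D ^ 2 - (x (n + 1) - y) ^ 2) / (2 * η (n + 1))
            + ((x (n + 1) - y) ^ 2 - (x (n + 2) - y) ^ 2) / (2 * η (n + 1)) := by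
        rw [show n + 1 + 1 = n + 2 from rfl, ← add_div]; ring_nf
      rw [e2]
      rw [e1] at ih
      have hsum : (1 / 2) * (∑ t ∈ Finset.Icc 1 n, (g t) ^ 2 * η t
            + (g (n + 1)) ^ 2 * η (n + 1))
          = (1 / 2) * ∑ t ∈ Finset.Icc 1 n, (g t) ^ 2 * η t
            + (1 / 2) * ((g (n + 1)) ^ 2 * η (n + 1)) := by ring
      rw [hsum]
      linarith
  have h := key T hT
  have hnn : 0 ≤ (x (T + 1) - y) ^ 2 / (2 * η T) := by
    apply div_nonneg (sq_nonneg _); linarith [hηpos T]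
  linarith
end

section
/- For projected gradient descent on a closed convex set F ⊆ ℝⁿ with updates x_{t+1} = P(x_t − η_t g_t), where P is the Euclidean projection onto F and η_t is positive and non-increasing, regret against any y ∈ F satisfies ∑_{t=1}^T g_t·(x_t − y) ≤ D²/(2η_T) + (1/2)∑_{t=1}^T ‖g_t‖² η_t, where D is the diameter of F. -/
set_option maxHeartbeats 1000000


open RealInnerProductSpace

theorem stmt_14 (n : ℕ) (F : Set (EuclideanSpace ℝ (Fin n)))
    (hFne : F.Nonempty) (hFclosed : IsClosed F) (hFconv : Convex ℝ F)
    (hFbdd : Bornology.IsBounded F) (D : ℝ) (hD : D = Metric.diam F)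
    (P : EuclideanSpace ℝ (Fin n) → EuclideanSpace ℝ (Fin n))
    (hP : ∀ z, P z ∈ F ∧ ∀ w ∈ F, ‖z - P z‖ ≤ ‖z - w‖)
    (T : ℕ) (hT : 1 ≤ T)
    (x g : ℕ → EuclideanSpace ℝ (Fin n)) (η : ℕ → ℝ)
    (hηpos : ∀ t, 0 < η t) (hηmono : ∀ s t, s ≤ t → η t ≤ η s)
    (hx1 : x 1 ∈ F)
    (hrec : ∀ t, 1 ≤ t → x (t + 1) = P (x t - η t • g t)) :
    ∀ y ∈ F,
      ∑ t ∈ Finset.Icc 1 T, ⟪g t, x t - y⟫ ≤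
        D ^ 2 / (2 * η T) +
          (1 / 2) * ∑ t ∈ Finset.Icc 1 T, ‖g t‖ ^ 2 * η t := by
  intro y hy
  have hPmem : ∀ z, P z ∈ F := fun z => (hP z).1
  haveI : Nonempty F := hFne.to_subtype
  -- variational inequality for the projection
  have hvar : ∀ z, ∀ w ∈ F, ⟪z - P z, w - P z⟫ ≤ 0 := by
    intro z
    have hleast : IsLeast (Set.range fun w : F => ‖z - (w : EuclideanSpace ℝ (Fin n))‖)
        ‖z - P z‖ :=
      ⟨⟨⟨P z, hPmem z⟩, rfl⟩, by rintro r ⟨w, rfl⟩; exact (hP z).2 w w.2⟩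
    have h1 : ‖z - P z‖ = ⨅ w : F, ‖z - (w : EuclideanSpace ℝ (Fin n))‖ := hleast.csInf_eq.symm
    exact (norm_eq_iInf_iff_real_inner_le_zero hFconv (hPmem z)).1 h1
  -- nonexpansion in squared norm
  have hnonexp : ∀ z, ∀ w ∈ F, ‖P z - w‖ ^ 2 ≤ ‖z - w‖ ^ 2 := by
    intro z w hw
    have h0 : 0 ≤ ⟪z - P z, P z - w⟫ := by
      have h1 := hvar z w hw
      have h2 : ⟪z - P z, P z - w⟫ = - ⟪z - P z, w - P z⟫ := by
        rw [← inner_neg_right]; congr 1; abel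
      linarith [h2 ▸ neg_nonneg.mpr h1]
    have hdecomp : ‖z - w‖ ^ 2 = ‖z - P z‖ ^ 2 + 2 * ⟪z - P z, P z - w⟫ + ‖P z - w‖ ^ 2 := by
      have h3 : z - w = (z - P z) + (P z - w) := by abel
      rw [h3, norm_add_sq_real]
    nlinarith [sq_nonneg ‖z - P z‖]
  -- iterates stay in F
  have hxF : ∀ t, 1 ≤ t → x t ∈ F := by
    intro t ht
    induction t, ht using Nat.le_induction with
    | base => exact hx1
    | succ m hm ih => rw [hrec m hm]; exact hPmem _
  have hD0 : 0 ≤ D := hD ▸ Metric.diam_nonneg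
  set a : ℕ → ℝ := fun t => ‖x t - y‖ ^ 2 with ha
  have haD : ∀ t, 1 ≤ t → a t ≤ D ^ 2 := by
    intro t ht
    have h1 : ‖x t - y‖ ≤ D := by
      rw [hD, ← dist_eq_norm]
      exact Metric.dist_le_diam_of_mem hFbdd (hxF t ht) hy
    have := pow_le_pow_left₀ (norm_nonneg _) h1 2
    simpa [ha] using this
  have ha0 : ∀ t, 0 ≤ a t := fun t => sq_nonneg _
  -- per-step inequality
  have hstep : ∀ t, 1 ≤ t →
      ⟪g t, x t - y⟫ ≤ (a t - a (t + 1)) / (2 * η t) + η t / 2 * ‖g t‖ ^ 2 := by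
    intro t ht
    have hat : ∀ s, a s = ‖x s - y‖ ^ 2 := fun s => rfl
    have hproj : a (t + 1) ≤ ‖x t - η t • g t - y‖ ^ 2 := by
      rw [hat, hrec t ht]
      exact hnonexp _ y hy
    have hexp : ‖x t - η t • g t - y‖ ^ 2
        = a t - 2 * η t * ⟪g t, x t - y⟫ + η t ^ 2 * ‖g t‖ ^ 2 := by
      have h3 : x t - η t • g t - y = (x t - y) - η t • g t := by abel
      rw [h3, norm_sub_sq_real, real_inner_smul_right, norm_smul, hat]
      rw [Real.norm_eq_abs, abs_of_pos (hηpos t), real_inner_comm]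
      ring
    have hpos := hηpos t
    have key : 2 * η t * ⟪g t, x t - y⟫ ≤ a t - a (t + 1) + η t ^ 2 * ‖g t‖ ^ 2 := by
      nlinarith [hproj, hexp]
    rw [div_add' _ _ _ (by positivity : (2 : ℝ) * η t ≠ 0), le_div_iff₀ (by positivity)]
    nlinarith [key]
  -- telescoping bound
  have htel : ∀ S, 1 ≤ S →
      ∑ t ∈ Finset.Icc 1 S, (a t - a (t + 1)) / (2 * η t)
        ≤ D ^ 2 / (2 * η S) - a (S + 1) / (2 * η S) := by
    intro S hS
    induction S, hS using Nat.le_induction with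
    | base =>
      rw [Finset.Icc_self, Finset.sum_singleton, ← sub_div]
      have h1 := haD 1 le_rfl
      have hp := hηpos 1
      rw [div_le_div_iff₀ (by linarith) (by linarith)]
      nlinarith [ha0 (1 + 1)]
    | succ m hm ih =>
      rw [Finset.sum_Icc_succ_top (by omega : 1 ≤ m + 1)]
      have hpm := hηpos m
      have hpm1 := hηpos (m + 1)
      have hc : 1 / (2 * η m) ≤ 1 / (2 * η (m + 1)) := by
        apply one_div_le_one_div_of_le (by linarith)
        have := hηmono m (m + 1) (by omega)
        linarith
      have h1 := haD (m + 1) (by omega)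
      have key1 : (D ^ 2 - a (m + 1)) / (2 * η m) ≤ (D ^ 2 - a (m + 1)) / (2 * η (m + 1)) := by
        rw [div_eq_mul_one_div, div_eq_mul_one_div (D ^ 2 - a (m + 1))]
        exact mul_le_mul_of_nonneg_left hc (by linarith)
      have ih' : ∑ t ∈ Finset.Icc 1 m, (a t - a (t + 1)) / (2 * η t)
          ≤ (D ^ 2 - a (m + 1)) / (2 * η m) := by
        rw [sub_div]; exact ih
      have e2 := ih'.trans key1
      have e3 : (D ^ 2 - a (m + 1)) / (2 * η (m + 1))
            + (a (m + 1) - a (m + 1 + 1)) / (2 * η (m + 1))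
          = D ^ 2 / (2 * η (m + 1)) - a (m + 1 + 1) / (2 * η (m + 1)) := by
        rw [← add_div, show D ^ 2 - a (m + 1) + (a (m + 1) - a (m + 1 + 1))
          = D ^ 2 - a (m + 1 + 1) by ring, sub_div]
      linarith [add_le_add_right e2 ((a (m + 1) - a (m + 1 + 1)) / (2 * η (m + 1)))]
  -- assemble
  calc ∑ t ∈ Finset.Icc 1 T, ⟪g t, x t - y⟫
      ≤ ∑ t ∈ Finset.Icc 1 T, ((a t - a (t + 1)) / (2 * η t) + η t / 2 * ‖g t‖ ^ 2) := by
        apply Finset.sum_le_sum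
        intro t htmem
        exact hstep t (Finset.mem_Icc.mp htmem).1
    _ = ∑ t ∈ Finset.Icc 1 T, (a t - a (t + 1)) / (2 * η t)
          + (1 / 2) * ∑ t ∈ Finset.Icc 1 T, ‖g t‖ ^ 2 * η t := by
        rw [Finset.sum_add_distrib, Finset.mul_sum]
        congr 1
        apply Finset.sum_congr rfl
        intro t _
        ring
    _ ≤ D ^ 2 / (2 * η T) + (1 / 2) * ∑ t ∈ Finset.Icc 1 T, ‖g t‖ ^ 2 * η t := by
        have h1 := htel T hT
        have h2 : 0 ≤ a (T + 1) / (2 * η T) := div_nonneg (ha0 _) (by linarith [hηpos T])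
        linarith
end
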